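/- The vectors Y₁=(1/φ², 1/φ, 0), Y₂=(0, 1/φ², 1/φ), Y₃=(1/φ, 0, 1/φ²) in ℝ³, where φ=(1+√5)/2, are linearly independent over ℝ but the ℤ-span of Y₁,…,Y₆ (with Y₄=(-1/φ²,1/φ,0), Y₅=(0,-1/φ²,1/φ), Y₆=(1/φ,0,-1/φ²)) is not a discrete subgroup of ℝ³; in particular it is not a lattice. -/

import Mathlib

/-- The icosahedral vectors `Y₁, Y₂, Y₃` are linearly independent over `ℝ`, but the
`ℤ`-span of `Y₁,…,Y₆` is not discrete (hence not a lattice) in `ℝ³`. -/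
theorem icosahedral_quasilattice_not_discrete
    (φ : ℝ) (hφ : φ = (1 + Real.sqrt 5) / 2)
    (Y : Fin 6 → (Fin 3 → ℝ))
    (hY : Y = ![![1 / φ ^ 2, 1 / φ, 0], ![0, 1 / φ ^ 2, 1 / φ], ![1 / φ, 0, 1 / φ ^ 2],
                ![-(1 / φ ^ 2), 1 / φ, 0], ![0, -(1 / φ ^ 2), 1 / φ],
                ![1 / φ, 0, -(1 / φ ^ 2)]]) :
    LinearIndependent ℝ ![Y 0, Y 1, Y 2] ∧
    ¬ DiscreteTopology
        (Submodule.span ℤ (Set.range Y) : Submodule ℤ (Fin 3 → ℝ)) := by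
  have h5 : (0:ℝ) ≤ 5 := by norm_num
  have hs : Real.sqrt 5 ^ 2 = 5 := Real.sq_sqrt h5
  have hs1 : (1:ℝ) < Real.sqrt 5 := by nlinarith [Real.sqrt_nonneg 5]
  have hs3 : Real.sqrt 5 < 3 := by nlinarith [Real.sqrt_nonneg 5]
  have hφpos : (0:ℝ) < φ := by rw [hφ]; positivity
  have hφ1 : 1 < φ := by rw [hφ]; linarith
  have hφ2 : φ < 2 := by rw [hφ]; linarith
  have hφsq : φ ^ 2 = φ + 1 := by rw [hφ]; field_simp; nlinarith
  constructor
  · subst hY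
    have hA : LinearIndependent ℝ (fun i =>
        (!![1 / φ ^ 2, 1 / φ, 0; 0, 1 / φ ^ 2, 1 / φ; 1 / φ, 0, 1 / φ ^ 2]
          : Matrix (Fin 3) (Fin 3) ℝ) i) := by
      change LinearIndependent ℝ (Matrix.row (!![1 / φ ^ 2, 1 / φ, 0; 0, 1 / φ ^ 2, 1 / φ; 1 / φ, 0, 1 / φ ^ 2]
        : Matrix (Fin 3) (Fin 3) ℝ))
      rw [Matrix.linearIndependent_rows_iff_isUnit, Matrix.isUnit_iff_isUnit_det,
        Matrix.det_fin_three, isUnit_iff_ne_zero]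
      norm_num [Matrix.cons_val_one]
      intro h
      have hp : (0:ℝ) < (φ ^ 2)⁻¹ * (φ ^ 2)⁻¹ * (φ ^ 2)⁻¹ + φ⁻¹ * φ⁻¹ * φ⁻¹ := by positivity
      simp only [Matrix.cons_val_two, Matrix.vecHead, Matrix.vecTail, Function.comp_apply, Matrix.cons_val_zero, Matrix.cons_val_one, Fin.succ_zero_eq_one] at h
      nlinarith
    convert hA using 1
    ext i j; fin_cases i <;> fin_cases j <;> rfl
  · set c : ℝ := φ - 1 with hcdef
    have hc0 : 0 < c := by simp [hcdef]; linarith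
    have hc1 : c < 1 := by simp [hcdef]; linarith
    have hinv : 1 / φ = c := by
      field_simp [hcdef]
      nlinarith
    have hinv2 : 1 / φ ^ 2 = c ^ 2 := by rw [one_div, ← hinv]; ring
    have hcsq : c ^ 2 = 1 - c := by
      simp only [hcdef]; nlinarith
    set S := (Submodule.span ℤ (Set.range Y) : Submodule ℤ (Fin 3 → ℝ)) with hS
    set v : ℕ → (Fin 3 → ℝ) := fun n => ![2 * c ^ n, 0, 0] with hv
    have hmemY : ∀ i, Y i ∈ S := fun i => Submodule.subset_span ⟨i, rfl⟩
    have e0 : Y 0 = ![1 / φ ^ 2, 1 / φ, 0] := by rw [hY]; rfl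
    have e2 : Y 2 = ![1 / φ, 0, 1 / φ ^ 2] := by rw [hY]; rfl
    have e3 : Y 3 = ![-(1 / φ ^ 2), 1 / φ, 0] := by rw [hY]; rfl
    have e5 : Y 5 = ![1 / φ, 0, -(1 / φ ^ 2)] := by rw [hY]; rfl
    have h1 : v 1 ∈ S := by
      have h : v 1 = Y 2 + Y 5 := by
        rw [e2, e5]; funext i
        fin_cases i <;> simp [hv, hinv, hinv2] <;> ring
      rw [h]; exact add_mem (hmemY 2) (hmemY 5)
    have h2 : v 2 ∈ S := by
      have h : v 2 = Y 0 - Y 3 := by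
        rw [e0, e3]; funext i
        fin_cases i <;> simp [hv, hinv, hinv2] <;> ring
      rw [h]; exact sub_mem (hmemY 0) (hmemY 3)
    have hrec : ∀ n, v (n + 2) = v n - v (n + 1) := by
      intro n; funext i
      fin_cases i <;> simp [hv] <;> linear_combination 2 * c ^ n * hcsq
    have key : ∀ n, v (n + 1) ∈ S ∧ v (n + 2) ∈ S := by
      intro n
      induction n with
      | zero => exact ⟨h1, h2⟩
      | succ n ih =>
        refine ⟨ih.2, ?_⟩
        rw [hrec (n + 1)]
        exact sub_mem ih.1 ih.2
    intro hD
    have hop : IsOpen ({(0 : S)} : Set S) := isOpen_discrete _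
    rw [Metric.isOpen_singleton_iff] at hop
    obtain ⟨ε, hε, hball⟩ := hop
    obtain ⟨n, hn⟩ := exists_pow_lt_of_lt_one (show (0:ℝ) < ε / 2 by linarith) hc1
    have hle : c ^ (n + 1) ≤ c ^ n := pow_le_pow_of_le_one hc0.le hc1.le (by omega)
    set x : S := ⟨v (n + 1), (key n).1⟩ with hx
    have hdist : dist x (0 : S) < ε := by
      rw [Subtype.dist_eq]
      show dist (v (n + 1)) (0 : Fin 3 → ℝ) < ε
      rw [dist_zero_right]
      have hb : ‖v (n + 1)‖ ≤ 2 * c ^ (n + 1) := by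
        apply pi_norm_le_iff_of_nonneg (by positivity) |>.2
        intro i
        fin_cases i <;> simp [hv, abs_of_nonneg, hc0.le] <;> positivity
      calc ‖v (n + 1)‖ ≤ 2 * c ^ (n + 1) := hb
        _ ≤ 2 * c ^ n := by linarith
        _ < ε := by linarith
    have h0eq := hball x hdist
    have hval : v (n + 1) = 0 := congrArg Subtype.val h0eq
    have h0 : (2 : ℝ) * c ^ (n + 1) = 0 := by
      have := congrFun hval 0
      simpa [hv] using this
    nlinarith [pow_pos hc0 (n + 1)]
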